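/- Let Q be a nondegenerate complex quadratic form in three variables and Δ_Q its associated Laplace-type operator. For any two polynomials M, N ∈ ℂ[x,y,z], the 'complex Dirichlet problem' Δ_Q(P) = M together with P ≡ N modulo the ideal ⟨Q − 1⟩ has a unique polynomial solution P. -/

import Mathlib

open MvPolynomial

/-- The Laplace-type operator `Δ_Q = Σ b^{jk} ∂_j ∂_k` associated to an invertible
symmetric matrix `B` (with `(b^{jk}) = B⁻¹`). -/
noncomputable def lapQ (B : Matrix (Fin 3) (Fin 3) ℂ) (P : MvPolynomial (Fin 3) ℂ) :
    MvPolynomial (Fin 3) ℂ :=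
  ∑ j : Fin 3, ∑ k : Fin 3, B⁻¹ j k • pderiv j (pderiv k P)

/-- The quadratic form `Q(v) = v B vᵀ` as a polynomial. -/
noncomputable def quadForm (B : Matrix (Fin 3) (Fin 3) ℂ) : MvPolynomial (Fin 3) ℂ :=
  ∑ j : Fin 3, ∑ k : Fin 3, B j k • (X j * X k)

/-! ### Auxiliary material -/

noncomputable def eulerOp (p : MvPolynomial (Fin 3) ℂ) : MvPolynomial (Fin 3) ℂ :=
  ∑ i : Fin 3, X i * pderiv i p

lemma X_mul_pderiv_monomial (i : Fin 3) (u : Fin 3 →₀ ℕ) (a : ℂ) :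
    X i * pderiv i (monomial u a) = (u i : ℂ) • monomial u a := by
  rw [pderiv_monomial]
  rcases Nat.eq_zero_or_pos (u i) with h | h
  · simp [h]
  · rw [X, monomial_mul, one_mul]
    rw [add_tsub_cancel_of_le (Finsupp.single_le_iff.mpr h)]
    rw [smul_monomial, mul_comm, smul_eq_mul]

lemma degree_single' (i : Fin 3) (n : ℕ) : (Finsupp.single i n).degree = n := by
  rcases Nat.eq_zero_or_pos n with h | h
  · simp [h, Finsupp.degree]
  · rw [Finsupp.degree_apply, Finsupp.support_single_ne_zero _ (Nat.pos_iff_ne_zero.mp h)]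
    simp

lemma degree_sub_single_add (u : Fin 3 →₀ ℕ) (i : Fin 3) (h : 0 < u i) :
    (u - Finsupp.single i 1).degree + 1 = u.degree := by
  have h1 : Finsupp.single i 1 ≤ u := Finsupp.single_le_iff.mpr h
  have h2 : u = (u - Finsupp.single i 1) + Finsupp.single i 1 := (tsub_add_cancel_of_le h1).symm
  conv_rhs => rw [h2]
  have hw := Finsupp.degree_eq_weight_one (σ := Fin 3) (R := ℕ)
  rw [DFunLike.ext_iff] at hw
  simp only [hw, map_add]
  congr 1
  rw [← hw, degree_single']

lemma degree_eq_sum (u : Fin 3 →₀ ℕ) : u.degree = ∑ i : Fin 3, u i := by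
  rw [Finsupp.degree]
  exact Finset.sum_subset (Finset.subset_univ _)
    (fun x _ hx => Finsupp.notMem_support_iff.mp hx)

lemma eulerOp_monomial (u : Fin 3 →₀ ℕ) (a : ℂ) :
    eulerOp (monomial u a) = (u.degree : ℂ) • monomial u a := by
  rw [eulerOp]
  simp_rw [X_mul_pderiv_monomial]
  rw [← Finset.sum_smul]
  congr 1
  rw [degree_eq_sum]
  push_cast
  rfl

lemma eulerOp_isHomogeneous {p : MvPolynomial (Fin 3) ℂ} {d : ℕ} (hp : p.IsHomogeneous d) :
    eulerOp p = (d : ℂ) • p := by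
  rw [eulerOp]
  have step : ∀ i : Fin 3, X i * pderiv i p
      = ∑ u ∈ p.support, X i * pderiv i (monomial u (coeff u p)) := by
    intro i
    conv_lhs => rw [p.as_sum]
    rw [map_sum, Finset.mul_sum]
  simp_rw [step]
  rw [Finset.sum_comm]
  calc ∑ u ∈ p.support, ∑ i : Fin 3, X i * pderiv i (monomial u (coeff u p))
      = ∑ u ∈ p.support, (d : ℂ) • monomial u (coeff u p) := by
        refine Finset.sum_congr rfl fun u hu => ?_
        rw [← eulerOp, eulerOp_monomial]
        congr 2
        have := hp (mem_support_iff.mp hu)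
        rw [Finsupp.degree_eq_weight_one]
        exact this
    _ = (d : ℂ) • p := by rw [← Finset.smul_sum, ← p.as_sum]

lemma pderiv_isHomogeneous {p : MvPolynomial (Fin 3) ℂ} {d : ℕ} (hp : p.IsHomogeneous d)
    (i : Fin 3) : (pderiv i p).IsHomogeneous (d - 1) := by
  conv_lhs => rw [p.as_sum]
  rw [map_sum]
  apply IsHomogeneous.sum
  intro u hu
  rw [pderiv_monomial]
  rcases Nat.eq_zero_or_pos (u i) with h | h
  · simp [h]
    exact isHomogeneous_zero _ _ _
  · apply isHomogeneous_monomial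
    have hd : u.degree = d := by
      have := hp (mem_support_iff.mp hu)
      rw [Finsupp.degree_eq_weight_one]; exact this
    have := degree_sub_single_add u i h
    omega

lemma pderiv_eq_zero_of_isHomogeneous_zero {p : MvPolynomial (Fin 3) ℂ}
    (hp : p.IsHomogeneous 0) (i : Fin 3) : pderiv i p = 0 := by
  conv_lhs => rw [p.as_sum]
  rw [map_sum]
  apply Finset.sum_eq_zero
  intro u hu
  rw [pderiv_monomial]
  have hd : u.degree = 0 := by
    rw [Finsupp.degree_eq_weight_one]; exact hp (mem_support_iff.mp hu)
  have : u i = 0 := by have := Finsupp.le_degree i u; omega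
  simp [this]

section MatrixFacts

variable {B : Matrix (Fin 3) (Fin 3) ℂ}

lemma invSymm (hB : B.IsSymm) : (B⁻¹).IsSymm := by
  rw [Matrix.IsSymm, Matrix.transpose_nonsing_inv, hB.eq]

lemma traceSum (hB : B.IsSymm) (hBinv : IsUnit B.det) :
    ∑ j : Fin 3, ∑ k : Fin 3, B⁻¹ j k * B j k = 3 := by
  have h1 : B⁻¹ * B = 1 := Matrix.nonsing_inv_mul B hBinv
  have h2 : ∀ j k : Fin 3, B j k = B k j := fun j k => (hB.apply k j)
  calc ∑ j : Fin 3, ∑ k : Fin 3, B⁻¹ j k * B j k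
      = ∑ j : Fin 3, ∑ k : Fin 3, B⁻¹ j k * B k j := by
        simp_rw [fun j k => h2 j k]
    _ = ∑ j : Fin 3, (B⁻¹ * B) j j := by simp [Matrix.mul_apply]
    _ = Matrix.trace (B⁻¹ * B) := rfl
    _ = 3 := by rw [h1, Matrix.trace_one]; norm_num

lemma pderiv_quadForm (k : Fin 3) :
    pderiv k (quadForm B) = ∑ a : Fin 3, (B k a + B a k) • X a := by
  rw [quadForm]
  simp_rw [Fin.sum_univ_three, smul_eq_C_mul]
  fin_cases k <;>
    simp [pderiv_mul, pderiv_X_self, pderiv_X_of_ne, map_add, map_mul, Fin.ext_iff] <;>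
    ring

lemma pderiv_pderiv_quadForm (j k : Fin 3) :
    pderiv j (pderiv k (quadForm B)) = C (B k j + B j k) := by
  rw [pderiv_quadForm]
  simp_rw [Fin.sum_univ_three, smul_eq_C_mul]
  fin_cases j <;> fin_cases k <;>
    simp [pderiv_mul, pderiv_X_self, pderiv_X_of_ne, Fin.ext_iff]

lemma key_collapse (hB : B.IsSymm) (hBinv : IsUnit B.det) (j : Fin 3)
    (p : MvPolynomial (Fin 3) ℂ) :
    ∑ k : Fin 3, B⁻¹ j k • (pderiv k (quadForm B) * p) = (2:ℂ) • (X j * p) := by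
  have h2 : ∀ a b : Fin 3, B a b = B b a := fun a b => (hB.apply b a)
  have step : ∀ k : Fin 3, B⁻¹ j k • (pderiv k (quadForm B) * p)
      = ∑ a : Fin 3, (B⁻¹ j k * (2 * B k a)) • (X a * p) := by
    intro k
    rw [pderiv_quadForm, Finset.sum_mul, Finset.smul_sum]
    refine Finset.sum_congr rfl fun a _ => ?_
    rw [smul_mul_assoc, ← smul_assoc, smul_eq_mul]
    congr 2
    rw [← h2 a k]; ring
  simp_rw [step]
  rw [Finset.sum_comm]
  have collapse : ∀ a : Fin 3, ∑ k : Fin 3, (B⁻¹ j k * (2 * B k a)) • (X a * p)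
      = (2 * (1 : Matrix (Fin 3) (Fin 3) ℂ) j a) • (X a * p) := by
    intro a
    rw [← Finset.sum_smul]
    congr 1
    rw [← Matrix.nonsing_inv_mul B hBinv, Matrix.mul_apply, Finset.mul_sum]
    exact Finset.sum_congr rfl fun k _ => by ring
  simp_rw [collapse]
  simp [Matrix.one_apply, ite_smul]

lemma lapQ_quadForm_mul (hB : B.IsSymm) (hBinv : IsUnit B.det)
    (S : MvPolynomial (Fin 3) ℂ) :
    lapQ B (quadForm B * S)
      = quadForm B * lapQ B S + (4:ℂ) • eulerOp S + (6:ℂ) • S := by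
  set Q := quadForm B with hQ
  have h2 : ∀ j k : Fin 3, pderiv j (pderiv k (Q * S))
      = C (B k j + B j k) * S + pderiv k Q * pderiv j S
        + pderiv j Q * pderiv k S + Q * pderiv j (pderiv k S) := by
    intro j k
    rw [pderiv_mul, map_add, pderiv_mul, pderiv_mul, pderiv_pderiv_quadForm]
    ring
  have expand : lapQ B (Q * S)
      = (∑ j : Fin 3, ∑ k : Fin 3, B⁻¹ j k • (C (B k j + B j k) * S))
        + (∑ j : Fin 3, ∑ k : Fin 3, B⁻¹ j k • (pderiv k Q * pderiv j S))
        + (∑ j : Fin 3, ∑ k : Fin 3, B⁻¹ j k • (pderiv j Q * pderiv k S))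
        + (∑ j : Fin 3, ∑ k : Fin 3, B⁻¹ j k • (Q * pderiv j (pderiv k S))) := by
    rw [lapQ]
    simp_rw [h2, smul_add, Finset.sum_add_distrib]
  rw [expand]
  have hsym : ∀ a b : Fin 3, B a b = B b a := fun a b => (hB.apply b a)
  have hsyminv : ∀ a b : Fin 3, B⁻¹ a b = B⁻¹ b a := fun a b => ((invSymm hB).apply b a)
  have T1 : ∑ j : Fin 3, ∑ k : Fin 3, B⁻¹ j k • (C (B k j + B j k) * S) = (6:ℂ) • S := by
    have e1 : ∀ j k : Fin 3, B⁻¹ j k • (C (B k j + B j k) * S)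
        = (2 * (B⁻¹ j k * B j k)) • S := by
      intro j k
      rw [← smul_eq_C_mul, ← smul_assoc, smul_eq_mul]
      congr 1
      rw [← hsym j k]; ring
    simp_rw [e1, ← Finset.sum_smul]
    congr 1
    simp_rw [← Finset.mul_sum]
    rw [traceSum hB hBinv]
    norm_num
  have T2 : ∑ j : Fin 3, ∑ k : Fin 3, B⁻¹ j k • (pderiv k Q * pderiv j S)
      = (2:ℂ) • eulerOp S := by
    rw [Finset.sum_congr rfl fun j _ => key_collapse hB hBinv j (pderiv j S)]
    rw [eulerOp, Finset.smul_sum]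
  have T3 : ∑ j : Fin 3, ∑ k : Fin 3, B⁻¹ j k • (pderiv j Q * pderiv k S)
      = (2:ℂ) • eulerOp S := by
    rw [Finset.sum_comm]
    have hswap : ∀ k j : Fin 3, B⁻¹ j k • (pderiv j Q * pderiv k S)
        = B⁻¹ k j • (pderiv j Q * pderiv k S) := fun k j => by rw [hsyminv j k]
    simp_rw [hswap]
    rw [Finset.sum_congr rfl fun k _ => key_collapse hB hBinv k (pderiv k S)]
    rw [eulerOp, Finset.smul_sum]
  have T4 : ∑ j : Fin 3, ∑ k : Fin 3, B⁻¹ j k • (Q * pderiv j (pderiv k S))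
      = Q * lapQ B S := by
    rw [lapQ, Finset.mul_sum]
    refine Finset.sum_congr rfl fun j _ => ?_
    rw [Finset.mul_sum]
    exact Finset.sum_congr rfl fun k _ => (mul_smul_comm _ _ _).symm
  rw [T1, T2, T3, T4]
  module

lemma smul_isHomogeneous {p : MvPolynomial (Fin 3) ℂ} {n : ℕ} (h : p.IsHomogeneous n) (c : ℂ) :
    (c • p).IsHomogeneous n := by
  rw [smul_eq_C_mul]; exact h.C_mul c

lemma lapQ_isHomogeneous {p : MvPolynomial (Fin 3) ℂ} {d : ℕ} (hp : p.IsHomogeneous d) :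
    (lapQ B p).IsHomogeneous (d - 2) := by
  rw [lapQ]
  refine IsHomogeneous.sum _ _ _ fun j _ => IsHomogeneous.sum _ _ _ fun k _ => ?_
  have := pderiv_isHomogeneous (pderiv_isHomogeneous hp k) j
  rw [show d - 1 - 1 = d - 2 by omega] at this
  exact smul_isHomogeneous this _

lemma lapQ_eq_zero_of_le_one {p : MvPolynomial (Fin 3) ℂ} {d : ℕ} (hp : p.IsHomogeneous d)
    (hd : d ≤ 1) : lapQ B p = 0 := by
  rw [lapQ]
  refine Finset.sum_eq_zero fun j _ => Finset.sum_eq_zero fun k _ => ?_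
  have h0 : (pderiv k p).IsHomogeneous 0 := by
    have := pderiv_isHomogeneous hp k
    rwa [show d - 1 = 0 by omega] at this
  rw [pderiv_eq_zero_of_isHomogeneous_zero h0 j, smul_zero]

lemma quadForm_isHomogeneous : (quadForm B).IsHomogeneous 2 := by
  rw [quadForm]
  refine IsHomogeneous.sum _ _ _ fun j _ => IsHomogeneous.sum _ _ _ fun k _ => ?_
  exact smul_isHomogeneous ((isHomogeneous_X ℂ j).mul (isHomogeneous_X ℂ k)) _

lemma eval_quadForm (v : Fin 3 → ℂ) :
    eval v (quadForm B) = ∑ j : Fin 3, ∑ k : Fin 3, B j k * (v j * v k) := by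
  rw [quadForm, map_sum]
  refine Finset.sum_congr rfl fun j _ => ?_
  rw [map_sum]
  refine Finset.sum_congr rfl fun k _ => ?_
  rw [smul_eq_C_mul, map_mul, map_mul, eval_C, eval_X, eval_X]

lemma quadForm_ne_zero (hB : B.IsSymm) (hBinv : IsUnit B.det) : quadForm B ≠ 0 := by
  intro h
  have hdiag : ∀ a : Fin 3, B a a = 0 := by
    intro a
    have hv := eval_quadForm (B := B) (fun i => if i = a then (1:ℂ) else 0)
    rw [h, map_zero] at hv
    have e : ∑ j : Fin 3, ∑ k : Fin 3, B j k *
        ((if j = a then (1:ℂ) else 0) * (if k = a then (1:ℂ) else 0)) = B a a := by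
      simp [mul_ite, ite_mul, Finset.sum_ite_eq']
    rw [e] at hv
    exact hv.symm
  have hoff : ∀ a b : Fin 3, B a b = 0 := by
    intro a b
    have hv := eval_quadForm (B := B)
      (fun i => (if i = a then (1:ℂ) else 0) + (if i = b then 1 else 0))
    rw [h, map_zero] at hv
    have e : ∑ j : Fin 3, ∑ k : Fin 3, B j k *
        (((if j = a then (1:ℂ) else 0) + (if j = b then 1 else 0)) *
         ((if k = a then (1:ℂ) else 0) + (if k = b then 1 else 0)))
        = B a a + B a b + B b a + B b b := by
      simp [mul_add, add_mul, Finset.sum_add_distrib, mul_ite, ite_mul, mul_comm,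
        Finset.sum_ite_eq']
      ring
    rw [e] at hv
    have hs : B b a = B a b := hB.apply a b
    rw [hdiag a, hdiag b, hs] at hv
    have h20 : (2:ℂ) * B a b = 0 := by linear_combination -hv
    exact (mul_eq_zero.mp h20).resolve_left two_ne_zero
  have hB0 : B = 0 := by ext i j; exact hoff i j
  rw [hB0] at hBinv
  simp only [Matrix.det_zero] at hBinv
  exact not_isUnit_zero hBinv

lemma lapQ_add (p q : MvPolynomial (Fin 3) ℂ) : lapQ B (p + q) = lapQ B p + lapQ B q := by
  simp only [lapQ, map_add, smul_add, Finset.sum_add_distrib]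

lemma lapQ_smul (c : ℂ) (p : MvPolynomial (Fin 3) ℂ) : lapQ B (c • p) = c • lapQ B p := by
  simp only [lapQ, Derivation.map_smul, Finset.smul_sum]
  refine Finset.sum_congr rfl fun j _ => Finset.sum_congr rfl fun k _ => ?_
  rw [smul_comm]

lemma lapQ_sub (p q : MvPolynomial (Fin 3) ℂ) : lapQ B (p - q) = lapQ B p - lapQ B q := by
  have := lapQ_add (B := B) (p - q) q
  rw [sub_add_cancel] at this
  rw [this]; ring

lemma lapQ_zero : lapQ B 0 = 0 := by
  simp only [lapQ, map_zero, smul_zero, Finset.sum_const_zero]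

end MatrixFacts

/-- The Dirichlet operator `S ↦ Δ_Q((Q-1)·S)` as a linear map. -/
noncomputable def phiMap (B : Matrix (Fin 3) (Fin 3) ℂ) :
    MvPolynomial (Fin 3) ℂ →ₗ[ℂ] MvPolynomial (Fin 3) ℂ where
  toFun S := lapQ B ((quadForm B - 1) * S)
  map_add' x y := by rw [mul_add, lapQ_add]
  map_smul' c x := by rw [mul_smul_comm, lapQ_smul, RingHom.id_apply]

section Main

variable {B : Matrix (Fin 3) (Fin 3) ℂ}

lemma phiMap_apply (hB : B.IsSymm) (hBinv : IsUnit B.det) (S : MvPolynomial (Fin 3) ℂ) :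
    phiMap B S = (quadForm B * lapQ B S + (4:ℂ) • eulerOp S + (6:ℂ) • S) - lapQ B S := by
  show lapQ B ((quadForm B - 1) * S) = _
  rw [sub_mul, one_mul, lapQ_sub, lapQ_quadForm_mul hB hBinv]

/-- Injectivity of the top symbol, by strong induction on the degree. -/
lemma symbol_inj (hB : B.IsSymm) (hBinv : IsUnit B.det) :
    ∀ d : ℕ, ∀ S : MvPolynomial (Fin 3) ℂ, S.IsHomogeneous d →
      ∀ c : ℕ, 0 < c → quadForm B * lapQ B S + ((c:ℕ):ℂ) • S = 0 → S = 0 := by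
  intro d
  induction d using Nat.strong_induction_on with
  | _ d IH =>
    intro S hS c hc heq
    rcases le_or_gt d 1 with hd | hd
    · rw [lapQ_eq_zero_of_le_one hS hd, mul_zero, zero_add] at heq
      have : ((c:ℕ):ℂ) ≠ 0 := Nat.cast_ne_zero.mpr hc.ne'
      exact (smul_eq_zero.mp heq).resolve_left this
    · -- d ≥ 2
      set Q := quadForm B with hQdef
      set T : MvPolynomial (Fin 3) ℂ := (-(c:ℂ)⁻¹) • lapQ B S with hT
      have hcC : ((c:ℕ):ℂ) ≠ 0 := Nat.cast_ne_zero.mpr hc.ne'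
      have hTd : T.IsHomogeneous (d - 2) := smul_isHomogeneous (lapQ_isHomogeneous hS) _
      have hSQ : S = Q * T := by
        have : ((c:ℕ):ℂ) • S = -(Q * lapQ B S) := by linear_combination heq
        rw [hT, mul_smul_comm]
        rw [← smul_right_injective (MvPolynomial (Fin 3) ℂ) hcC |>.eq_iff]
        rw [this, smul_smul]
        rw [mul_neg, mul_inv_cancel₀ hcC]
        simp
      have hQne : Q ≠ 0 := quadForm_ne_zero hB hBinv
      have hlapS : lapQ B S = (-((c:ℕ):ℂ)) • T := by
        rw [hT, smul_smul, neg_mul_neg, mul_inv_cancel₀ hcC, one_smul]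
      have hlap2 : lapQ B S = Q * lapQ B T + (((4*(d-2)+6 : ℕ)):ℂ) • T := by
        conv_lhs => rw [hSQ, lapQ_quadForm_mul hB hBinv, eulerOp_isHomogeneous hTd]
        push_cast
        module
      have heqT : Q * lapQ B T + (((c + 4*(d-2)+6 : ℕ)):ℂ) • T = 0 := by
        have h3 : (((c + 4*(d-2)+6 : ℕ)):ℂ) • T
            = (((4*(d-2)+6 : ℕ)):ℂ) • T + ((c:ℕ):ℂ) • T := by push_cast; module
        rw [h3, ← add_assoc, ← hlap2, hlapS]
        module
      have hT0 : T = 0 := IH (d - 2) (by omega) T hTd (c + 4*(d-2)+6) (by omega) heqT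
      rw [hSQ, hT0, mul_zero]

lemma top_component_ne_zero {p : MvPolynomial (Fin 3) ℂ} (hp : p ≠ 0) :
    homogeneousComponent p.totalDegree p ≠ 0 := by
  obtain ⟨u, hu, hdeg⟩ := Finset.exists_mem_eq_sup p.support
    (support_nonempty.mpr hp) (fun s : Fin 3 →₀ ℕ => s.sum fun _ e => e)
  intro h0
  have hc := coeff_homogeneousComponent p.totalDegree p u
  rw [h0, coeff_zero] at hc
  have hdeg' : u.degree = p.totalDegree := by
    rw [MvPolynomial.totalDegree, hdeg]
    rfl
  rw [if_pos hdeg'] at hc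
  exact mem_support_iff.mp hu hc.symm

/-- The degree-`d` homogeneous component of `phiMap B p` for `p` homogeneous of degree `e ≤ d`. -/
lemma comp_phiMap_homog (hB : B.IsSymm) (hBinv : IsUnit B.det)
    {p : MvPolynomial (Fin 3) ℂ} {e : ℕ} (hp : p.IsHomogeneous e) {d : ℕ} (hed : e ≤ d) :
    homogeneousComponent d (phiMap B p)
      = if e = d then quadForm B * lapQ B p + (((4*e+6 : ℕ)):ℂ) • p else 0 := by
  have hA : (quadForm B * lapQ B p + (((4*e+6 : ℕ)):ℂ) • p).IsHomogeneous e := by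
    apply IsHomogeneous.add
    · rcases le_or_gt e 1 with he | he
      · rw [lapQ_eq_zero_of_le_one hp he, mul_zero]
        exact isHomogeneous_zero _ _ _
      · have := quadForm_isHomogeneous (B := B) |>.mul (lapQ_isHomogeneous (B := B) hp)
        rwa [show 2 + (e - 2) = e by omega] at this
    · exact smul_isHomogeneous hp _
  have hphi : phiMap B p = (quadForm B * lapQ B p + (((4*e+6 : ℕ)):ℂ) • p) - lapQ B p := by
    rw [phiMap_apply hB hBinv, eulerOp_isHomogeneous hp]
    push_cast
    module
  rw [hphi, map_sub]
  have hlapcomp : homogeneousComponent d (lapQ B p) = 0 := by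
    rcases le_or_gt e 1 with he | he
    · rw [lapQ_eq_zero_of_le_one hp he, map_zero]
    · rw [homogeneousComponent_of_mem ((mem_homogeneousSubmodule _ _).mpr
        (lapQ_isHomogeneous hp))]
      rw [if_neg (by omega)]
  rw [hlapcomp, sub_zero]
  rw [homogeneousComponent_of_mem ((mem_homogeneousSubmodule _ _).mpr hA)]
  by_cases hde : e = d
  · rw [if_pos hde.symm, if_pos hde]
  · rw [if_neg (fun hh => hde hh.symm), if_neg hde]

lemma phiMap_injective (hB : B.IsSymm) (hBinv : IsUnit B.det) :
    Function.Injective (phiMap B) := by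
  rw [injective_iff_map_eq_zero]
  intro S hS0
  by_contra hS
  set d := S.totalDegree with hd
  set Sd := homogeneousComponent d S with hSd
  have hSdne : Sd ≠ 0 := top_component_ne_zero hS
  have hdecomp : S = ∑ e ∈ Finset.range (d + 1), homogeneousComponent e S :=
    (sum_homogeneousComponent S).symm
  have hcomp : homogeneousComponent d (phiMap B S)
      = quadForm B * lapQ B Sd + (((4*d+6 : ℕ)):ℂ) • Sd := by
    conv_lhs => rw [hdecomp, map_sum, map_sum]
    rw [Finset.sum_congr rfl (fun e he => comp_phiMap_homog hB hBinv
      (homogeneousComponent_isHomogeneous e S)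
      (by rw [Finset.mem_range] at he; omega))]
    rw [Finset.sum_ite_eq' (Finset.range (d+1)) d
      (fun e => quadForm B * lapQ B (homogeneousComponent e S)
        + (((4*e+6 : ℕ)):ℂ) • homogeneousComponent e S)]
    rw [if_pos (Finset.self_mem_range_succ d)]
  rw [hS0, map_zero] at hcomp
  exact hSdne (symbol_inj hB hBinv d Sd (homogeneousComponent_isHomogeneous d S)
    (4*d+6) (by omega) hcomp.symm)

lemma phiMap_mapsTo (hB : B.IsSymm) (hBinv : IsUnit B.det) (d : ℕ) :
    ∀ p ∈ restrictTotalDegree (Fin 3) ℂ d, phiMap B p ∈ restrictTotalDegree (Fin 3) ℂ d := by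
  intro p hp
  rw [mem_restrictTotalDegree] at hp
  have hrw : phiMap B p = ∑ e ∈ Finset.range (p.totalDegree + 1),
      phiMap B (homogeneousComponent e p) := by
    conv_lhs => rw [← sum_homogeneousComponent p]
    rw [map_sum]
  rw [hrw]
  apply Submodule.sum_mem
  intro e he
  rw [Finset.mem_range] at he
  have hed : e ≤ d := by omega
  have hpe := homogeneousComponent_isHomogeneous e p
  set pe := homogeneousComponent e p with hpedef
  have hA : (quadForm B * lapQ B pe + (((4*e+6 : ℕ)):ℂ) • pe).IsHomogeneous e := by
    apply IsHomogeneous.add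
    · rcases le_or_gt e 1 with he1 | he1
      · rw [lapQ_eq_zero_of_le_one hpe he1, mul_zero]
        exact isHomogeneous_zero _ _ _
      · have := quadForm_isHomogeneous (B := B) |>.mul (lapQ_isHomogeneous (B := B) hpe)
        rwa [show 2 + (e - 2) = e by omega] at this
    · exact smul_isHomogeneous hpe _
  have hphi : phiMap B pe = (quadForm B * lapQ B pe + (((4*e+6 : ℕ)):ℂ) • pe) - lapQ B pe := by
    rw [phiMap_apply hB hBinv, eulerOp_isHomogeneous hpe]
    push_cast
    module
  rw [hphi]
  apply Submodule.sub_mem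
  · rw [mem_restrictTotalDegree]
    exact le_trans hA.totalDegree_le hed
  · rw [mem_restrictTotalDegree]
    exact le_trans (lapQ_isHomogeneous (B := B) hpe).totalDegree_le (by omega)

lemma phiMap_surjective (hB : B.IsSymm) (hBinv : IsUnit B.det) :
    Function.Surjective (phiMap B) := by
  intro W
  set d := W.totalDegree with hd
  set V := restrictTotalDegree (Fin 3) ℂ d with hV
  have hmaps := phiMap_mapsTo hB hBinv (B := B) d
  set f : V →ₗ[ℂ] V := (phiMap B).restrict hmaps with hf
  have hinj : Function.Injective f := by
    intro x y hxy
    apply Subtype.ext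
    apply phiMap_injective hB hBinv
    exact congrArg Subtype.val hxy
  have hsurj : Function.Surjective f := LinearMap.injective_iff_surjective.mp hinj
  obtain ⟨⟨S, hSmem⟩, hSval⟩ := hsurj ⟨W, by rw [mem_restrictTotalDegree]⟩
  exact ⟨S, congrArg Subtype.val hSval⟩

end Main

/-- The complex Dirichlet problem: for a nondegenerate quadratic form `Q` in three
variables and any polynomials `M, N`, there is a unique polynomial `P` with
`Δ_Q(P) = M` and `P ≡ N` modulo the ideal `⟨Q − 1⟩`. -/
theorem dirichlet_problem_unique_solution (B : Matrix (Fin 3) (Fin 3) ℂ)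
    (hB : B.IsSymm) (hBinv : IsUnit B.det)
    (M N : MvPolynomial (Fin 3) ℂ) :
    ∃! P : MvPolynomial (Fin 3) ℂ,
      lapQ B P = M ∧ P - N ∈ Ideal.span {quadForm B - 1} := by
  obtain ⟨S, hS⟩ := phiMap_surjective hB hBinv (M - lapQ B N)
  set P := N + (quadForm B - 1) * S with hP
  have hPmem : P - N ∈ Ideal.span {quadForm B - 1} := by
    rw [hP, add_sub_cancel_left]
    exact Ideal.mem_span_singleton.mpr (Dvd.intro S rfl)
  have hPlap : lapQ B P = M := by
    rw [hP, lapQ_add]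
    have h1 : lapQ B ((quadForm B - 1) * S) = M - lapQ B N := hS
    rw [h1]; ring
  refine ⟨P, ⟨hPlap, hPmem⟩, ?_⟩
  rintro P' ⟨hP'1, hP'2⟩
  obtain ⟨S₀, hS₀⟩ := Ideal.mem_span_singleton.mp (Ideal.sub_mem _ hP'2 hPmem)
  have hsub : P' - P = (quadForm B - 1) * S₀ := by linear_combination hS₀
  have hlap0 : phiMap B S₀ = 0 := by
    show lapQ B ((quadForm B - 1) * S₀) = 0
    rw [← hsub, lapQ_sub, hP'1, hPlap, sub_self]
  have hS₀0 : S₀ = 0 := by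
    have h := phiMap_injective hB hBinv (a₁ := S₀) (a₂ := 0)
    simp only [map_zero] at h
    exact h hlap0
  have h0 : P' - P = 0 := by rw [hsub, hS₀0, mul_zero]
  linear_combination h0
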